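/- The category Decomp of decomposition spaces and CULF maps is locally cartesian closed: for every decomposition space D, the slice category Decomp/D has finite limits and is cartesian closed. -/

import Mathlib

open CategoryTheory CategoryTheory.Limits Opposite Simplicial

namespace DecompPaper

def IsActive {a b : SimplexCategory} (f : a ⟶ b) : Prop :=
  f.toOrderHom 0 = 0 ∧ f.toOrderHom (Fin.last a.len) = Fin.last b.len

def IsInert {a b : SimplexCategory} (f : a ⟶ b) : Prop :=
  ∀ i : Fin a.len, (f.toOrderHom i.succ : ℕ) = (f.toOrderHom i.castSucc : ℕ) + 1

def IsTopPres {a b : SimplexCategory} (f : a ⟶ b) : Prop :=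
  f.toOrderHom (Fin.last a.len) = Fin.last b.len

def IsDecomp (X : SSet.{0}) : Prop :=
  ∀ ⦃a b c d : SimplexCategory⦄ (f : a ⟶ b) (g : a ⟶ c) (h : b ⟶ d) (k : c ⟶ d),
    IsActive f → IsInert g → IsPushout f g h k →
      IsPullback (X.map h.op) (X.map k.op) (X.map f.op) (X.map g.op)

def IsCULF {Y X : SSet.{0}} (F : Y ⟶ X) : Prop :=
  ∀ ⦃a b : SimplexCategory⦄ (g : a ⟶ b), IsActive g →
    IsPullback (Y.map g.op) (F.app (op b)) (F.app (op a)) (X.map g.op)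

def IsRightFib {Y X : SSet.{0}} (F : Y ⟶ X) : Prop :=
  ∀ n : ℕ,
    IsPullback (Y.map (SimplexCategory.δ (0 : Fin (n + 2))).op)
      (F.app (op (SimplexCategory.mk (n + 1)))) (F.app (op (SimplexCategory.mk n)))
      (X.map (SimplexCategory.δ (0 : Fin (n + 2))).op)

/-! ### The edgewise subdivision functor `Q` -/

def natApp {m n : ℕ} (f : Fin (m + 1) →o Fin (n + 1)) (t : ℕ) : ℕ :=
  (f ⟨min t m, Nat.lt_succ_of_le (min_le_right t m)⟩ : ℕ)

lemma natApp_le {m n : ℕ} (f : Fin (m + 1) →o Fin (n + 1)) (t : ℕ) : natApp f t ≤ n :=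
  Nat.lt_succ_iff.mp (f _).isLt

lemma natApp_mono {m n : ℕ} (f : Fin (m + 1) →o Fin (n + 1)) {s t : ℕ} (h : s ≤ t) :
    natApp f s ≤ natApp f t :=
  f.monotone (by simp only [Fin.mk_le_mk]; omega)

lemma natApp_of_le {m n : ℕ} (f : Fin (m + 1) →o Fin (n + 1)) {t : ℕ} (h : t ≤ m) :
    natApp f t = (f ⟨t, by omega⟩ : ℕ) := by
  have harg : (⟨min t m, Nat.lt_succ_of_le (min_le_right t m)⟩ : Fin (m + 1)) = ⟨t, by omega⟩ :=
    Fin.ext (Nat.min_eq_left h)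
  unfold natApp
  rw [harg]

lemma natApp_comp {l m n : ℕ} (f : Fin (l + 1) →o Fin (m + 1)) (g : Fin (m + 1) →o Fin (n + 1))
    (t : ℕ) : natApp (g.comp f) t = natApp g (natApp f t) := by
  have h : natApp f t ≤ m := natApp_le f t
  rw [natApp_of_le g h]
  unfold natApp
  rfl

def Qfun {m n : ℕ} (f : Fin (m + 1) →o Fin (n + 1)) : Fin (2 * m + 2) → Fin (2 * n + 2) :=
  fun i =>
    if (i : ℕ) ≤ m then ⟨n - natApp f (m - (i : ℕ)), by omega⟩
    else ⟨n + 1 + natApp f ((i : ℕ) - (m + 1)), by have := natApp_le f ((i : ℕ) - (m + 1)); omega⟩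

lemma Qfun_val_le {m n : ℕ} (f : Fin (m + 1) →o Fin (n + 1)) (i : Fin (2 * m + 2))
    (h : (i : ℕ) ≤ m) : (Qfun f i : ℕ) = n - natApp f (m - (i : ℕ)) := by
  unfold Qfun; rw [if_pos h]

lemma Qfun_val_gt {m n : ℕ} (f : Fin (m + 1) →o Fin (n + 1)) (i : Fin (2 * m + 2))
    (h : ¬ (i : ℕ) ≤ m) : (Qfun f i : ℕ) = n + 1 + natApp f ((i : ℕ) - (m + 1)) := by
  unfold Qfun; rw [if_neg h]

lemma Qfun_monotone {m n : ℕ} (f : Fin (m + 1) →o Fin (n + 1)) : Monotone (Qfun f) := by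
  intro i j hij
  have hij' : (i : ℕ) ≤ (j : ℕ) := hij
  rw [Fin.le_def]
  by_cases hi : (i : ℕ) ≤ m <;> by_cases hj : (j : ℕ) ≤ m
  · rw [Qfun_val_le f i hi, Qfun_val_le f j hj]
    have h1 := natApp_mono f (show m - (j : ℕ) ≤ m - (i : ℕ) by omega)
    have h2 := natApp_le f (m - (i : ℕ))
    omega
  · rw [Qfun_val_le f i hi, Qfun_val_gt f j hj]
    omega
  · omega
  · rw [Qfun_val_gt f i hi, Qfun_val_gt f j hj]
    have h1 := natApp_mono f (show (i : ℕ) - (m + 1) ≤ (j : ℕ) - (m + 1) by omega)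
    omega

def Q : SimplexCategory ⥤ SimplexCategory where
  obj a := SimplexCategory.mk (2 * a.len + 1)
  map {a b} f := SimplexCategory.Hom.mk ⟨Qfun f.toOrderHom, Qfun_monotone f.toOrderHom⟩
  map_id a := by
    apply SimplexCategory.Hom.ext
    apply OrderHom.ext
    funext i
    apply Fin.ext
    show (Qfun (SimplexCategory.Hom.toOrderHom (𝟙 a)) i : ℕ) = (i : ℕ)
    have hi : (i : ℕ) < 2 * a.len + 2 := i.isLt
    have hid : ∀ t : ℕ, natApp (SimplexCategory.Hom.toOrderHom (𝟙 a)) t = min t a.len :=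
      fun t => rfl
    by_cases h : (i : ℕ) ≤ a.len
    · rw [Qfun_val_le _ i h, hid]; omega
    · rw [Qfun_val_gt _ i h, hid]; omega
  map_comp {a b c} f g := by
    apply SimplexCategory.Hom.ext
    apply OrderHom.ext
    funext i
    apply Fin.ext
    show (Qfun (SimplexCategory.Hom.toOrderHom (f ≫ g)) i : ℕ)
        = (Qfun g.toOrderHom (Qfun f.toOrderHom i) : ℕ)
    have hi : (i : ℕ) < 2 * a.len + 2 := i.isLt
    have h2 : SimplexCategory.Hom.toOrderHom (f ≫ g)
        = g.toOrderHom.comp f.toOrderHom := rfl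
    rw [h2]
    by_cases h : (i : ℕ) ≤ a.len
    · have hA := natApp_le f.toOrderHom (a.len - (i : ℕ))
      have hfi : ((Qfun f.toOrderHom i : Fin (2 * b.len + 2)) : ℕ) ≤ b.len := by
        rw [Qfun_val_le _ i h]; omega
      rw [Qfun_val_le _ i h, Qfun_val_le _ _ hfi, Qfun_val_le _ i h, natApp_comp]
      rw [show b.len - (b.len - natApp f.toOrderHom (a.len - (i : ℕ)))
          = natApp f.toOrderHom (a.len - (i : ℕ)) by omega]
    · have hA := natApp_le f.toOrderHom ((i : ℕ) - (a.len + 1))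
      have hfi : ¬ ((Qfun f.toOrderHom i : Fin (2 * b.len + 2)) : ℕ) ≤ b.len := by
        rw [Qfun_val_gt _ i h]; omega
      rw [Qfun_val_gt _ i h, Qfun_val_gt _ _ hfi, Qfun_val_gt _ i h, natApp_comp]
      rw [show b.len + 1 + natApp f.toOrderHom ((i : ℕ) - (a.len + 1)) - (b.len + 1)
          = natApp f.toOrderHom ((i : ℕ) - (a.len + 1)) by omega]

/-- Edgewise subdivision of simplicial sets: precomposition with `Qᵒᵖ`. -/
def sdF : SSet.{0} ⥤ SSet.{0} :=
  (Functor.whiskeringLeft SimplexCategoryᵒᵖ SimplexCategoryᵒᵖ (Type 0)).obj Q.op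

/-- The unique active map `[1] ⟶ [m]`. -/
def act1 (m : ℕ) : SimplexCategory.mk 1 ⟶ SimplexCategory.mk m :=
  SimplexCategory.Hom.mk
    ⟨fun i => if (i : ℕ) = 0 then ⟨0, by omega⟩ else Fin.last m, by
      intro i j hij
      by_cases h : (i : ℕ) = 0
      · by_cases h' : (j : ℕ) = 0 <;> simp [h, h', Fin.le_def]
      · have : (j : ℕ) ≠ 0 := by have := Fin.le_def.mp hij; omega
        simp [h, this]⟩

/-- The vertex `t` as a map `[0] ⟶ [n]`. -/
def vert (n : ℕ) (t : Fin (n + 1)) : SimplexCategory.mk 0 ⟶ SimplexCategory.mk n :=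
  SimplexCategory.Hom.mk (OrderHom.const _ t)

/-- The `i`-th edge inclusion `[1] ⟶ [n]`. -/
def edgeIncl (n : ℕ) (i : Fin n) : SimplexCategory.mk 1 ⟶ SimplexCategory.mk n :=
  SimplexCategory.Hom.mk
    ⟨fun j => ⟨(i : ℕ) + (j : ℕ), by
        have h1 := i.isLt
        have h2 := j.isLt
        simp only [SimplexCategory.len_mk] at h2 ⊢
        omega⟩, by
      intro x y h
      have := Fin.le_def.mp h
      simp only [Fin.mk_le_mk]
      omega⟩

/-- The set of chains of `k` composable edges in a simplicial set. -/
def SegalChains (X : SSet.{0}) (k : ℕ) : Type :=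
  {p : Fin k → X.obj (op (SimplexCategory.mk 1)) //
    ∀ i j : Fin k, (j : ℕ) = (i : ℕ) + 1 →
      X.map (vert 1 1).op (p i) = X.map (vert 1 0).op (p j)}

/-- The spine (Segal) map from `k`-simplices to chains of `k` edges. -/
def spine (X : SSet.{0}) (k : ℕ) (σ : X.obj (op (SimplexCategory.mk k))) : SegalChains X k :=
  ⟨fun i => X.map (edgeIncl k i).op σ, by
    intro i j hij
    have h1 : vert 1 1 ≫ edgeIncl k i = vert 1 0 ≫ edgeIncl k j := by
      apply SimplexCategory.Hom.ext
      apply OrderHom.ext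
      funext z
      apply Fin.ext
      show ((edgeIncl k i).toOrderHom ((vert 1 1).toOrderHom z) : ℕ)
          = ((edgeIncl k j).toOrderHom ((vert 1 0).toOrderHom z) : ℕ)
      show ((i : ℕ) + ((1 : Fin 2) : ℕ)) = ((j : ℕ) + ((0 : Fin 2) : ℕ))
      simp
      omega
    calc X.map (vert 1 1).op (X.map (edgeIncl k i).op σ)
        = X.map ((vert 1 1 ≫ edgeIncl k i).op) σ := by
          rw [op_comp, FunctorToTypes.map_comp_apply]
      _ = X.map ((vert 1 0 ≫ edgeIncl k j).op) σ := by rw [h1]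
      _ = X.map (vert 1 0).op (X.map (edgeIncl k j).op σ) := by
          rw [op_comp, FunctorToTypes.map_comp_apply]⟩


/-! ### The category of decomposition spaces and CULF maps -/

lemma IsCULF.id (X : SSet.{0}) : IsCULF (𝟙 X) := by
  intro a b g hg
  have : (𝟙 X : X ⟶ X).app (op b) = 𝟙 (X.obj (op b)) := rfl
  refine IsPullback.of_vert_isIso ⟨by simp⟩

lemma IsCULF.comp {X Y Z : SSet.{0}} {f : X ⟶ Y} {g : Y ⟶ Z} (hf : IsCULF f) (hg : IsCULF g) :
    IsCULF (f ≫ g) := by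
  intro a b s hs
  simpa using (hf s hs).paste_vert (hg s hs)

/-- The category of decomposition spaces and CULF maps. -/
structure DecompCat : Type 1 where
  X : SSet.{0}
  decomp : IsDecomp X

instance : Category.{0} DecompCat where
  Hom A B := {f : A.X ⟶ B.X // IsCULF f}
  id A := ⟨𝟙 A.X, IsCULF.id A.X⟩
  comp f g := ⟨f.1 ≫ g.1, f.2.comp g.2⟩
  id_comp f := Subtype.ext (Category.id_comp f.1)
  comp_id f := Subtype.ext (Category.comp_id f.1)
  assoc f g h := Subtype.ext (Category.assoc f.1 g.1 h.1)

/-! ### Discrete fibrations -/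

/-- A functor is a discrete fibration if every morphism into the image of an object
has a unique lift with that object as codomain. -/
def IsDiscreteFibration {E C : Type*} [Category E] [Category C] (p : E ⥤ C) : Prop :=
  ∀ (y : E) (c : C) (f : c ⟶ p.obj y),
    ∃! g : Σ x : E, x ⟶ y, ∃ h : p.obj g.1 = c, p.map g.2 = eqToHom h ≫ f

/-- The category of discrete fibrations over `T`, with morphisms the functors over `T`. -/
structure DFibOver (T : Type) [SmallCategory T] : Type 1 where
  E : Type
  [cat : SmallCategory E]
  p : E ⥤ T
  fib : IsDiscreteFibration p

attribute [instance] DFibOver.cat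

instance {T : Type} [SmallCategory T] : Category.{0} (DFibOver T) where
  Hom A B := {G : A.E ⥤ B.E // G ⋙ B.p = A.p}
  id A := ⟨𝟭 A.E, Functor.id_comp A.p⟩
  comp f g := ⟨f.1 ⋙ g.1, by rw [Functor.assoc, g.2, f.2]⟩
  id_comp f := Subtype.ext (Functor.id_comp f.1)
  comp_id f := Subtype.ext (Functor.comp_id f.1)
  assoc f g h := Subtype.ext (Functor.assoc f.1 g.1 h.1)

/-! ### The category of elements of a simplicial set -/

/-- The category of elements of a simplicial set `X`: objects are simplices of `X`;
a morphism `(m, τ) ⟶ (n, σ)` is a map `f : [m] ⟶ [n]` of `Δ` with `X(f)(σ) = τ`. -/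
structure El (X : SSet.{0}) : Type where
  n : ℕ
  σ : X.obj (op (SimplexCategory.mk n))

instance (X : SSet.{0}) : SmallCategory (El X) where
  Hom a b := {f : SimplexCategory.mk a.n ⟶ SimplexCategory.mk b.n // X.map f.op b.σ = a.σ}
  id a := ⟨𝟙 _, by simp⟩
  comp {a b c} f g := ⟨f.1 ≫ g.1, by
    rw [op_comp, FunctorToTypes.map_comp_apply, g.2, f.2]⟩
  id_comp f := Subtype.ext (Category.id_comp f.1)
  comp_id f := Subtype.ext (Category.comp_id f.1)
  assoc f g h := Subtype.ext (Category.assoc f.1 g.1 h.1)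

/-- Functoriality of the category of elements in the simplicial set. -/
def elMap {X Y : SSet.{0}} (f : X ⟶ Y) : El X ⥤ El Y where
  obj e := ⟨e.n, f.app _ e.σ⟩
  map {a b} g := ⟨g.1, by
    have h := NatTrans.naturality_apply f g.1.op b.σ
    dsimp only
    rw [← h, g.2]⟩
  map_id a := Subtype.ext rfl
  map_comp f g := Subtype.ext rfl

/-- The functor `ω_X : el(sd X) ⥤ el(X)` lying over `Q`. -/
def elSd (X : SSet.{0}) : El (sdF.obj X) ⥤ El X where
  obj e := ⟨2 * e.n + 1, e.σ⟩
  map {a b} g := ⟨Q.map g.1, g.2⟩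
  map_id a := Subtype.ext (Q.map_id _)
  map_comp f g := Subtype.ext (Q.map_comp f.1 g.1)

/-- The objects (dimensions) of the chain in `Δ` underlying a `k`-simplex of the nerve of
the category of elements. -/
def chainObj {X : SSet.{0}} {k : ℕ} (F : ComposableArrows (El X) k) : Fin (k + 1) → ℕ :=
  fun i => (F.obj i).n

/-- The consecutive maps in `Δ` underlying a `k`-simplex of the nerve of the category of
elements. -/
def chainMap {X : SSet.{0}} {k : ℕ} (F : ComposableArrows (El X) k) :
    ∀ i : Fin k, SimplexCategory.mk (chainObj F i.castSucc) ⟶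
      SimplexCategory.mk (chainObj F i.succ) :=
  fun i => (F.map (homOfLE (Fin.castSucc_lt_succ (i := i)).le)).1

/-! ### Ladders -/

/-- `IsLadderA n f α` says that `α` is a commutative ladder from the chain of maps
`Q(d⊤) : Q[i] ⟶ Q[i+1]` to the chain `f` with all vertical maps `α i : Q[i] ⟶ [n i]`
active. -/
def IsLadderA {k : ℕ} (n : Fin (k + 1) → ℕ)
    (f : ∀ i : Fin k, SimplexCategory.mk (n i.castSucc) ⟶ SimplexCategory.mk (n i.succ))
    (α : ∀ i : Fin (k + 1), Q.obj (SimplexCategory.mk (i : ℕ)) ⟶ SimplexCategory.mk (n i)) :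
    Prop :=
  (∀ i, IsActive (α i)) ∧
    ∀ i : Fin k, Q.map (SimplexCategory.δ (Fin.last ((i : ℕ) + 1))) ≫ α i.succ
      = α i.castSucc ≫ f i

/-- `IsLadderB n f β` says that `β` is a commutative ladder from the chain of top coface maps
`d⊤ : [i] ⟶ [i+1]` to the chain `f` with all vertical maps `β i : [i] ⟶ [n i]`
top-preserving. -/
def IsLadderB {k : ℕ} (n : Fin (k + 1) → ℕ)
    (f : ∀ i : Fin k, SimplexCategory.mk (n i.castSucc) ⟶ SimplexCategory.mk (n i.succ))
    (β : ∀ i : Fin (k + 1), SimplexCategory.mk (i : ℕ) ⟶ SimplexCategory.mk (n i)) : Prop :=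
  (∀ i, IsTopPres (β i)) ∧
    ∀ i : Fin k, SimplexCategory.δ (Fin.last ((i : ℕ) + 1)) ≫ β i.succ = β i.castSucc ≫ f i

/-- `IsLambda Λ` says that the family of simplicial maps `Λ X : N(el X) ⟶ sd X` is,
in each degree, given by sending a `k`-simplex `([n₀] → ⋯ → [n_k], σ)` to `X(α_k)(σ)`,
where `α_k : Q[k] ⟶ [n_k]` is the last vertical map of the (unique) active ladder over the
underlying chain in `Δ`. -/
def IsLambda (Λ : ∀ X : SSet.{0}, nerve (El X) ⟶ sdF.obj X) : Prop :=
  ∀ (X : SSet.{0}) (k : ℕ) (F : ComposableArrows (El X) k),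
    ∃ α, IsLadderA (chainObj F) (chainMap F) α ∧
      (Λ X).app (op (SimplexCategory.mk k)) F
        = X.map (α (Fin.last k)).op (F.obj (Fin.last k)).σ

/-! ### The last-segment inclusion and `cod` -/

/-- The last-segment inclusion `[n] ⟶ Q[n] = [2n+1]`. -/
def Lhom (a : SimplexCategory) : a ⟶ Q.obj a :=
  SimplexCategory.Hom.mk
    ⟨fun i => ⟨a.len + 1 + (i : ℕ), by
        have h : (i : ℕ) < a.len + 1 := i.isLt
        exact show a.len + 1 + (i : ℕ) < 2 * a.len + 1 + 1 by omega⟩,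
      by intro i j hle; have := Fin.le_def.mp hle; exact Fin.mk_le_mk.mpr (by omega)⟩

/-- The natural transformation `id ⇒ Q` given by the last-segment inclusions
`[n] ⟶ [2n+1]`. -/
def Lnat : 𝟭 SimplexCategory ⟶ Q where
  app := Lhom
  naturality a b f := by
    apply SimplexCategory.Hom.ext
    apply OrderHom.ext
    funext i
    apply Fin.ext
    have hi : (i : ℕ) < a.len + 1 := i.isLt
    have h1 : (SimplexCategory.Hom.toOrderHom ((𝟭 SimplexCategory).map f ≫ Lhom b) i : ℕ)
        = b.len + 1 + (f.toOrderHom i : ℕ) := rfl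
    have h4 : ((Lhom a).toOrderHom i : ℕ) = a.len + 1 + (i : ℕ) := rfl
    have key : (SimplexCategory.Hom.toOrderHom (Lhom a ≫ Q.map f) i : ℕ)
        = b.len + 1 + (f.toOrderHom i : ℕ) := by
      have h3 : ¬ ((Lhom a).toOrderHom i : ℕ) ≤ a.len := by omega
      have h5 : (SimplexCategory.Hom.toOrderHom (Lhom a ≫ Q.map f) i : ℕ)
          = (Qfun f.toOrderHom ((Lhom a).toOrderHom i) : ℕ) := rfl
      rw [h5, Qfun_val_gt f.toOrderHom _ h3, h4,
        show a.len + 1 + (i : ℕ) - (a.len + 1) = (i : ℕ) by omega,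
        natApp_of_le f.toOrderHom (show (i : ℕ) ≤ a.len by omega)]
      exact congrArg (fun z : Fin (a.len + 1) => b.len + 1 + (f.toOrderHom z : ℕ))
        (Fin.ext rfl)
    exact h1.trans key.symm

/-- The map `cod_X : sd(X) ⟶ X` induced by the last-segment inclusions. -/
def codN (X : SSet.{0}) : sdF.obj X ⟶ X := Functor.whiskerRight (NatTrans.op Lnat) X

/-! ### Strict pullbacks of categories -/

/-- The strict pullback of a functor `p` along a functor `G`. -/
structure StrictPB {A B C : Type} [SmallCategory A] [SmallCategory B] [SmallCategory C]
    (G : A ⥤ C) (p : B ⥤ C) : Type where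
  pt : A
  fib : B
  eq : p.obj fib = G.obj pt

instance {A B C : Type} [SmallCategory A] [SmallCategory B] [SmallCategory C]
    (G : A ⥤ C) (p : B ⥤ C) : SmallCategory (StrictPB G p) where
  Hom x y := {fg : (x.pt ⟶ y.pt) × (x.fib ⟶ y.fib) //
    p.map fg.2 = eqToHom x.eq ≫ G.map fg.1 ≫ eqToHom y.eq.symm}
  id x := ⟨(𝟙 x.pt, 𝟙 x.fib), by simp⟩
  comp {x y z} f g := ⟨(f.1.1 ≫ g.1.1, f.1.2 ≫ g.1.2), by
    rw [p.map_comp, f.2, g.2, G.map_comp]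
    simp⟩
  id_comp f := Subtype.ext (Prod.ext (Category.id_comp f.1.1) (Category.id_comp f.1.2))
  comp_id f := Subtype.ext (Prod.ext (Category.comp_id f.1.1) (Category.comp_id f.1.2))
  assoc f g h := Subtype.ext (Prod.ext (Category.assoc _ _ _) (Category.assoc _ _ _))

/-- Projection of the strict pullback to the base. -/
def pbProj {A B C : Type} [SmallCategory A] [SmallCategory B] [SmallCategory C]
    (G : A ⥤ C) (p : B ⥤ C) : StrictPB G p ⥤ A where
  obj x := x.pt
  map f := f.1.1
  map_id x := rfl
  map_comp f g := rfl


/-! ### Auxiliary results for the main theorem -/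

/-- Extract unique lifts from a pullback square of types. -/
theorem exists_unique_of_isPullback {P X Y Z : Type} {fst : P ⟶ X} {snd : P ⟶ Y}
    {f : X ⟶ Z} {g : Y ⟶ Z} (h : IsPullback fst snd f g) (x : X) (y : Y)
    (hxy : f x = g y) : ∃! p : P, fst p = x ∧ snd p = y := by
  let p : P := h.lift (TypeCat.ofHom fun _ : PUnit => x) (TypeCat.ofHom fun _ => y)
    (ConcreteCategory.hom_ext _ _ fun _ => hxy) PUnit.unit
  refine ⟨p, ⟨types_congr_hom (h.lift_fst _ _ _) PUnit.unit, types_congr_hom (h.lift_snd _ _ _) PUnit.unit⟩, ?_⟩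
  intro q hq
  have := PullbackCone.IsLimit.hom_ext h.isLimit
    (k := TypeCat.ofHom fun _ : PUnit => q) (l := TypeCat.ofHom fun _ : PUnit => p) ?_ ?_
  · exact types_congr_hom this PUnit.unit
  · exact ConcreteCategory.hom_ext _ _ fun _ =>
      hq.1.trans (types_congr_hom (h.lift_fst (TypeCat.ofHom fun _ : PUnit => x)
        (TypeCat.ofHom fun _ => y)
        _) PUnit.unit).symm
  · exact ConcreteCategory.hom_ext _ _ fun _ =>
      hq.2.trans (types_congr_hom (h.lift_snd (TypeCat.ofHom fun _ : PUnit => x)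
        (TypeCat.ofHom fun _ => y)
        _) PUnit.unit).symm

/-- Build a pullback square of types from unique lifts. -/
theorem isPullback_of_exists_unique {P X Y Z : Type} {fst : P ⟶ X} {snd : P ⟶ Y}
    {f : X ⟶ Z} {g : Y ⟶ Z} (comm : ∀ p, f (fst p) = g (snd p))
    (h : ∀ (x : X) (y : Y), f x = g y → ∃! p : P, fst p = x ∧ snd p = y) :
    IsPullback fst snd f g := by
  refine IsPullback.of_isLimit' ⟨ConcreteCategory.hom_ext _ _ comm⟩ ?_
  refine PullbackCone.IsLimit.mk _ (fun s => TypeCat.ofHom fun z => (h (s.fst z) (s.snd z) (types_congr_hom s.condition z)).choose) ?_ ?_ ?_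
  · intro s
    exact ConcreteCategory.hom_ext _ _ fun z => (h (s.fst z) (s.snd z) (types_congr_hom s.condition z)).choose_spec.1.1
  · intro s
    exact ConcreteCategory.hom_ext _ _ fun z => (h (s.fst z) (s.snd z) (types_congr_hom s.condition z)).choose_spec.1.2
  · intro s m hm1 hm2
    exact ConcreteCategory.hom_ext _ _ fun z => (h (s.fst z) (s.snd z) (types_congr_hom s.condition z)).choose_spec.2 _
      ⟨types_congr_hom hm1 z, types_congr_hom hm2 z⟩


section PushoutActive

lemma inert_linear {a c : SimplexCategory} (g : a ⟶ c) (hg : IsInert g) (i : Fin (a.len + 1)) :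
    (g.toOrderHom i : ℕ) = (g.toOrderHom 0 : ℕ) + (i : ℕ) := by
  induction i using Fin.induction with
  | zero => simp
  | succ i ih =>
      have := hg i
      rw [this, ih]
      simp only [Fin.coe_castSucc, Fin.val_succ]
      omega

lemma inert_bound {a c : SimplexCategory} (g : a ⟶ c) (hg : IsInert g) :
    (g.toOrderHom 0 : ℕ) + a.len ≤ c.len := by
  have h1 := inert_linear g hg (Fin.last a.len)
  have h2 := (g.toOrderHom (Fin.last a.len)).isLt
  simp only [Fin.val_last] at h1
  omega

lemma active_zero {a b : SimplexCategory} {f : a ⟶ b} (hf : IsActive f) :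
    (f.toOrderHom 0 : ℕ) = 0 := by rw [hf.1]; rfl

lemma active_last {a b : SimplexCategory} {f : a ⟶ b} (hf : IsActive f) :
    (f.toOrderHom (Fin.last a.len) : ℕ) = b.len := by rw [hf.2]; rfl

/-- The explicit pushout object of an active map along an inert map. -/
def pobj (a b c : SimplexCategory) : SimplexCategory :=
  SimplexCategory.mk (c.len - a.len + b.len)

/-- The explicit inert leg of the pushout. -/
def ph {a b c : SimplexCategory} (g : a ⟶ c) (hg : IsInert g) : b ⟶ pobj a b c := by
  refine SimplexCategory.Hom.mk ⟨fun j => ⟨(g.toOrderHom 0 : ℕ) + (j : ℕ), ?_⟩, ?_⟩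
  · have h1 := inert_bound g hg
    have h2 := j.isLt
    show _ < c.len - a.len + b.len + 1
    omega
  · intro i j hij
    simp only [Fin.mk_le_mk]
    have := Fin.le_def.mp hij
    omega

/-- The explicit active leg of the pushout. -/
def pk {a b c : SimplexCategory} (f : a ⟶ b) (g : a ⟶ c) (hg : IsInert g) :
    c ⟶ pobj a b c := by
  have hb := inert_bound g hg
  refine SimplexCategory.Hom.mk ⟨fun i =>
    if _ : (i : ℕ) < (g.toOrderHom 0 : ℕ) then
      ⟨(i : ℕ), by show _ < c.len - a.len + b.len + 1; omega⟩
    else if h2 : (i : ℕ) ≤ (g.toOrderHom 0 : ℕ) + a.len then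
      ⟨(g.toOrderHom 0 : ℕ) + (f.toOrderHom ⟨(i : ℕ) - (g.toOrderHom 0 : ℕ), by omega⟩ : ℕ), by
        have := (f.toOrderHom ⟨(i : ℕ) - (g.toOrderHom 0 : ℕ), by omega⟩).isLt
        show _ < c.len - a.len + b.len + 1
        omega⟩
    else ⟨(i : ℕ) + b.len - a.len, by
        have := i.isLt
        show _ < c.len - a.len + b.len + 1
        omega⟩, ?_⟩
  intro i j hij
  have hij' : (i : ℕ) ≤ (j : ℕ) := Fin.le_def.mp hij
  have hfb : ∀ z : Fin (a.len + 1), (f.toOrderHom z : ℕ) ≤ b.len := fun z =>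
    Nat.lt_succ_iff.mp (f.toOrderHom z).isLt
  rw [Fin.le_def]
  dsimp only
  split_ifs with h1 h2 h3 h4 h5 h6 h7 <;> simp only [] <;>
    first
      | omega
      | (have hmono := Fin.le_def.mp (f.toOrderHom.monotone
            (show (⟨(i : ℕ) - (g.toOrderHom 0 : ℕ), by omega⟩ : Fin (a.len + 1)) ≤
              ⟨(j : ℕ) - (g.toOrderHom 0 : ℕ), by omega⟩ by
              simp only [Fin.mk_le_mk]; omega))
         omega)
      | (have := hfb ⟨(i : ℕ) - (g.toOrderHom 0 : ℕ), by omega⟩; omega)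
      | (have := hfb ⟨(j : ℕ) - (g.toOrderHom 0 : ℕ), by omega⟩; omega)

lemma pk_active {a b c : SimplexCategory} (f : a ⟶ b) (g : a ⟶ c)
    (hf : IsActive f) (hg : IsInert g) : IsActive (pk f g hg) := by
  have hb := inert_bound g hg
  have hf0 := active_zero hf
  have hfl := active_last hf
  constructor
  · apply Fin.ext
    show (((pk f g hg).toOrderHom 0 : Fin _) : ℕ) = 0
    show (dite _ _ _ : Fin _).val = 0
    have h0 : ((0 : Fin (c.len + 1)) : ℕ) = 0 := rfl
    split_ifs with h1 h2
    · rfl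
    · show (g.toOrderHom 0 : ℕ) + (f.toOrderHom ⟨((0 : Fin (c.len+1)) : ℕ) - _, _⟩ : ℕ) = 0
      have hg0 : (g.toOrderHom 0 : ℕ) = 0 := by omega
      have harg : (⟨((0 : Fin (c.len+1)) : ℕ) - (g.toOrderHom 0 : ℕ), by omega⟩ :
          Fin (a.len + 1)) = 0 := by
        apply Fin.ext; show _ - _ = 0; omega
      rw [harg]
      omega
    · omega
  · apply Fin.ext
    show (((pk f g hg).toOrderHom (Fin.last c.len) : Fin _) : ℕ) = c.len - a.len + b.len
    show (dite _ _ _ : Fin _).val = c.len - a.len + b.len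
    have hl : ((Fin.last c.len : Fin (c.len + 1)) : ℕ) = c.len := rfl
    split_ifs with h1 h2
    · omega
    · show (g.toOrderHom 0 : ℕ) +
        (f.toOrderHom ⟨((Fin.last c.len : Fin (c.len+1)) : ℕ) - _, _⟩ : ℕ) = c.len - a.len + b.len
      have harg : (⟨((Fin.last c.len : Fin (c.len+1)) : ℕ) - (g.toOrderHom 0 : ℕ), by omega⟩ :
          Fin (a.len + 1)) = Fin.last a.len := by
        apply Fin.ext; show _ - _ = a.len; omega
      rw [harg, hfl]
      omega
    · show ((Fin.last c.len : Fin (c.len + 1)) : ℕ) + b.len - a.len = c.len - a.len + b.len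
      omega

lemma pcomm {a b c : SimplexCategory} (f : a ⟶ b) (g : a ⟶ c)
    (hf : IsActive f) (hg : IsInert g) : f ≫ ph g hg (b := b) = g ≫ pk f g hg := by
  apply SimplexCategory.Hom.ext
  apply OrderHom.ext
  funext i
  apply Fin.ext
  have hb := inert_bound g hg
  have hlin := inert_linear g hg i
  show ((ph g hg).toOrderHom (f.toOrderHom i) : ℕ) = ((pk f g hg).toOrderHom (g.toOrderHom i) : ℕ)
  have hL : ((ph g hg).toOrderHom (f.toOrderHom i) : ℕ)
      = (g.toOrderHom 0 : ℕ) + (f.toOrderHom i : ℕ) := rfl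
  rw [hL]
  show _ = (dite _ _ _ : Fin _).val
  split_ifs with h1 h2
  · omega
  · show _ = (g.toOrderHom 0 : ℕ) +
      (f.toOrderHom ⟨(g.toOrderHom i : ℕ) - (g.toOrderHom 0 : ℕ), _⟩ : ℕ)
    have harg : (⟨(g.toOrderHom i : ℕ) - (g.toOrderHom 0 : ℕ), by omega⟩ :
        Fin (a.len + 1)) = i := by
      apply Fin.ext; show _ - _ = (i : ℕ); omega
    rw [harg]
  · have := i.isLt
    omega

end PushoutActive


section UMP

variable {a b c : SimplexCategory} (f : a ⟶ b) (g : a ⟶ c)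

lemma ph_val (hg : IsInert g) (j : Fin (b.len + 1)) :
    ((ph g hg (b := b)).toOrderHom j : ℕ) = (g.toOrderHom 0 : ℕ) + (j : ℕ) := rfl

lemma pk_val_low (hg : IsInert g) (i : Fin (c.len + 1))
    (h : (i : ℕ) < (g.toOrderHom 0 : ℕ)) :
    ((pk f g hg).toOrderHom i : ℕ) = (i : ℕ) := by
  show (dite _ _ _ : Fin _).val = _
  rw [dif_pos h]

lemma pk_val_mid (hg : IsInert g) (i : Fin (c.len + 1))
    (h1 : ¬ (i : ℕ) < (g.toOrderHom 0 : ℕ))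
    (h2 : (i : ℕ) ≤ (g.toOrderHom 0 : ℕ) + a.len) :
    ((pk f g hg).toOrderHom i : ℕ)
      = (g.toOrderHom 0 : ℕ)
        + (f.toOrderHom ⟨(i : ℕ) - (g.toOrderHom 0 : ℕ), by omega⟩ : ℕ) := by
  show (dite _ _ _ : Fin _).val = _
  rw [dif_neg h1, dif_pos h2]

lemma pk_val_high (hg : IsInert g) (i : Fin (c.len + 1))
    (h1 : ¬ (i : ℕ) < (g.toOrderHom 0 : ℕ))
    (h2 : ¬ (i : ℕ) ≤ (g.toOrderHom 0 : ℕ) + a.len) :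
    ((pk f g hg).toOrderHom i : ℕ) = (i : ℕ) + b.len - a.len := by
  show (dite _ _ _ : Fin _).val = _
  rw [dif_neg h1, dif_neg h2]

variable {e : SimplexCategory} (u : b ⟶ e) (v : c ⟶ e)

/-- The descent map out of the explicit pushout. -/
def pdesc (hf : IsActive f) (hg : IsInert g) (hc : f ≫ u = g ≫ v) : pobj a b c ⟶ e := by
  have hb := inert_bound g hg
  have hcond : ∀ i : Fin (a.len + 1),
      u.toOrderHom (f.toOrderHom i) = v.toOrderHom (g.toOrderHom i) := fun i =>
    congrArg (fun q : a ⟶ e => q.toOrderHom i) hc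
  have key0 : u.toOrderHom ⟨0, by omega⟩ = v.toOrderHom (g.toOrderHom 0) := by
    have h0 := hcond 0
    rwa [show f.toOrderHom 0 = ⟨0, by omega⟩ from Fin.ext (active_zero hf)] at h0
  have keyl : u.toOrderHom ⟨b.len, by omega⟩ = v.toOrderHom (g.toOrderHom (Fin.last a.len)) := by
    have h0 := hcond (Fin.last a.len)
    rwa [show f.toOrderHom (Fin.last a.len) = ⟨b.len, by omega⟩
      from Fin.ext (active_last hf)] at h0
  have hglast : (g.toOrderHom (Fin.last a.len) : ℕ) = (g.toOrderHom 0 : ℕ) + a.len := by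
    rw [inert_linear g hg (Fin.last a.len)]; simp
  refine SimplexCategory.Hom.mk ⟨fun t =>
    if _ : (t : ℕ) < (g.toOrderHom 0 : ℕ) then
      v.toOrderHom ⟨(t : ℕ), by have : (t : ℕ) < c.len - a.len + b.len + 1 := t.isLt; omega⟩
    else if _ : (t : ℕ) ≤ (g.toOrderHom 0 : ℕ) + b.len then
      u.toOrderHom ⟨(t : ℕ) - (g.toOrderHom 0 : ℕ), by
        have : (t : ℕ) < c.len - a.len + b.len + 1 := t.isLt; omega⟩
    else
      v.toOrderHom ⟨(t : ℕ) - b.len + a.len, by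
        have : (t : ℕ) < c.len - a.len + b.len + 1 := t.isLt; omega⟩, ?_⟩
  intro t t' htt'
  have htt : (t : ℕ) ≤ (t' : ℕ) := Fin.le_def.mp htt'
  dsimp only
  split_ifs with h1 h2 h3 h4 h5 h6 h7
  · exact v.toOrderHom.monotone (by simp only [Fin.mk_le_mk]; omega)
  · calc v.toOrderHom ⟨(t : ℕ), _⟩
        ≤ v.toOrderHom (g.toOrderHom 0) :=
          v.toOrderHom.monotone (by rw [Fin.le_def]; show (t : ℕ) ≤ _; omega)
      _ = u.toOrderHom ⟨0, by omega⟩ := key0.symm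
      _ ≤ _ := u.toOrderHom.monotone (by simp only [Fin.mk_le_mk]; omega)
  · exact v.toOrderHom.monotone (by simp only [Fin.mk_le_mk]; omega)
  · omega
  · exact u.toOrderHom.monotone (by simp only [Fin.mk_le_mk]; omega)
  · calc u.toOrderHom ⟨(t : ℕ) - _, _⟩
        ≤ u.toOrderHom ⟨b.len, by omega⟩ :=
          u.toOrderHom.monotone (by simp only [Fin.mk_le_mk]; omega)
      _ = v.toOrderHom (g.toOrderHom (Fin.last a.len)) := keyl
      _ ≤ _ := v.toOrderHom.monotone (by rw [Fin.le_def]; show _ ≤ (t' : ℕ) - b.len + a.len; omega)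
  · omega
  · omega
  · exact v.toOrderHom.monotone (by simp only [Fin.mk_le_mk]; omega)

lemma pdesc_val_low (hf : IsActive f) (hg : IsInert g) (hc : f ≫ u = g ≫ v)
    (t : Fin ((pobj a b c).len + 1)) (h : (t : ℕ) < (g.toOrderHom 0 : ℕ)) :
    (pdesc f g u v hf hg hc).toOrderHom t
      = v.toOrderHom ⟨(t : ℕ), by
          have hb := inert_bound g hg
          have : (t : ℕ) < c.len - a.len + b.len + 1 := t.isLt
          omega⟩ := by
  show (dite _ _ _ : Fin _) = _
  rw [dif_pos h]

lemma pdesc_val_mid (hf : IsActive f) (hg : IsInert g) (hc : f ≫ u = g ≫ v)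
    (t : Fin ((pobj a b c).len + 1)) (h1 : ¬ (t : ℕ) < (g.toOrderHom 0 : ℕ))
    (h2 : (t : ℕ) ≤ (g.toOrderHom 0 : ℕ) + b.len) :
    (pdesc f g u v hf hg hc).toOrderHom t
      = u.toOrderHom ⟨(t : ℕ) - (g.toOrderHom 0 : ℕ), by
          have : (t : ℕ) < c.len - a.len + b.len + 1 := t.isLt
          omega⟩ := by
  show (dite _ _ _ : Fin _) = _
  rw [dif_neg h1, dif_pos h2]

lemma pdesc_val_high (hf : IsActive f) (hg : IsInert g) (hc : f ≫ u = g ≫ v)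
    (t : Fin ((pobj a b c).len + 1)) (h1 : ¬ (t : ℕ) < (g.toOrderHom 0 : ℕ))
    (h2 : ¬ (t : ℕ) ≤ (g.toOrderHom 0 : ℕ) + b.len) :
    (pdesc f g u v hf hg hc).toOrderHom t
      = v.toOrderHom ⟨(t : ℕ) - b.len + a.len, by
          have hb := inert_bound g hg
          have : (t : ℕ) < c.len - a.len + b.len + 1 := t.isLt
          omega⟩ := by
  show (dite _ _ _ : Fin _) = _
  rw [dif_neg h1, dif_neg h2]

set_option maxHeartbeats 1600000 in
/-- The explicit cocone is a pushout. -/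
lemma ppushout (hf : IsActive f) (hg : IsInert g) :
    IsPushout f g (ph g hg (b := b)) (pk f g hg) := by
  have hb := inert_bound g hg
  have hfb : ∀ z : Fin (a.len + 1), (f.toOrderHom z : ℕ) ≤ b.len := fun z =>
    Nat.lt_succ_iff.mp (f.toOrderHom z).isLt
  apply IsPushout.of_isColimit' ⟨pcomm f g hf hg⟩
  refine PushoutCocone.IsColimit.mk _
    (fun s => pdesc f g s.inl s.inr hf hg s.condition)
    (fun s => ?_) (fun s => ?_) (fun s w hw1 hw2 => ?_)
  · -- fac_left
    apply SimplexCategory.Hom.ext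
    apply OrderHom.ext
    funext j
    have hj := j.isLt
    show (pdesc f g s.inl s.inr hf hg s.condition).toOrderHom ((ph g hg).toOrderHom j)
      = s.inl.toOrderHom j
    have hv : (((ph g hg (b := b)).toOrderHom j : Fin _) : ℕ)
        = (g.toOrderHom 0 : ℕ) + (j : ℕ) := rfl
    rw [pdesc_val_mid f g s.inl s.inr hf hg s.condition _ (by omega) (by omega)]
    congr 1
    apply Fin.ext
    show (((ph g hg (b := b)).toOrderHom j : Fin _) : ℕ) - (g.toOrderHom 0 : ℕ) = (j : ℕ)
    rw [hv]
    omega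
  · -- fac_right
    apply SimplexCategory.Hom.ext
    apply OrderHom.ext
    funext i
    have hi := i.isLt
    show (pdesc f g s.inl s.inr hf hg s.condition).toOrderHom ((pk f g hg).toOrderHom i)
      = s.inr.toOrderHom i
    have hcond : ∀ z : Fin (a.len + 1),
        s.inl.toOrderHom (f.toOrderHom z) = s.inr.toOrderHom (g.toOrderHom z) := fun z =>
      congrArg (fun q : a ⟶ s.pt => q.toOrderHom z) s.condition
    by_cases h1 : (i : ℕ) < (g.toOrderHom 0 : ℕ)
    · have hv := pk_val_low f g hg i h1
      rw [pdesc_val_low f g s.inl s.inr hf hg s.condition _ (by rw [hv]; omega)]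
      congr 1
      exact Fin.ext hv
    · by_cases h2 : (i : ℕ) ≤ (g.toOrderHom 0 : ℕ) + a.len
      · have hv := pk_val_mid f g hg i h1 h2
        have hfz : (f.toOrderHom ⟨(i : ℕ) - (g.toOrderHom 0 : ℕ), by omega⟩ : ℕ) ≤ b.len :=
          hfb _
        rw [pdesc_val_mid f g s.inl s.inr hf hg s.condition _ (by rw [hv]; omega)
          (by rw [hv]; omega)]
        have harg : (⟨(((pk f g hg).toOrderHom i : Fin _) : ℕ) - (g.toOrderHom 0 : ℕ), by
            have := ((pk f g hg).toOrderHom i).isLt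
            have h3 : (((pk f g hg).toOrderHom i : Fin _) : ℕ) < c.len - a.len + b.len + 1 := this
            omega⟩ : Fin (b.len + 1))
            = f.toOrderHom ⟨(i : ℕ) - (g.toOrderHom 0 : ℕ), by omega⟩ := by
          apply Fin.ext
          show (((pk f g hg).toOrderHom i : Fin _) : ℕ) - (g.toOrderHom 0 : ℕ) = _
          omega
        rw [harg, hcond ⟨(i : ℕ) - (g.toOrderHom 0 : ℕ), by omega⟩]
        congr 1
        apply Fin.ext
        rw [inert_linear g hg ⟨(i : ℕ) - (g.toOrderHom 0 : ℕ), by omega⟩]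
        show (g.toOrderHom 0 : ℕ) + ((i : ℕ) - (g.toOrderHom 0 : ℕ)) = (i : ℕ)
        omega
      · have hv := pk_val_high f g hg i h1 h2
        rw [pdesc_val_high f g s.inl s.inr hf hg s.condition _ (by rw [hv]; omega)
          (by rw [hv]; omega)]
        congr 1
        apply Fin.ext
        show (((pk f g hg).toOrderHom i : Fin _) : ℕ) - b.len + a.len = (i : ℕ)
        rw [hv]; omega
  · -- uniq
    apply SimplexCategory.Hom.ext
    apply OrderHom.ext
    funext t
    have ht : (t : ℕ) < c.len - a.len + b.len + 1 := t.isLt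
    show w.toOrderHom t = (pdesc f g s.inl s.inr hf hg s.condition).toOrderHom t
    by_cases h1 : (t : ℕ) < (g.toOrderHom 0 : ℕ)
    · rw [pdesc_val_low f g s.inl s.inr hf hg s.condition _ h1]
      have hsrc : (pk f g hg).toOrderHom ⟨(t : ℕ), by omega⟩ = t :=
        Fin.ext (pk_val_low f g hg _ h1)
      calc w.toOrderHom t = w.toOrderHom ((pk f g hg).toOrderHom ⟨(t : ℕ), by omega⟩) := by
            rw [hsrc]
        _ = s.inr.toOrderHom ⟨(t : ℕ), by omega⟩ :=
            congrArg (fun q : c ⟶ s.pt => q.toOrderHom ⟨(t : ℕ), by omega⟩) hw2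
    · by_cases h2 : (t : ℕ) ≤ (g.toOrderHom 0 : ℕ) + b.len
      · rw [pdesc_val_mid f g s.inl s.inr hf hg s.condition _ h1 h2]
        have hsrc : (ph g hg (b := b)).toOrderHom ⟨(t : ℕ) - (g.toOrderHom 0 : ℕ), by omega⟩
            = t := by
          apply Fin.ext
          show (g.toOrderHom 0 : ℕ) + ((t : ℕ) - (g.toOrderHom 0 : ℕ)) = (t : ℕ)
          omega
        calc w.toOrderHom t
            = w.toOrderHom ((ph g hg (b := b)).toOrderHom
                ⟨(t : ℕ) - (g.toOrderHom 0 : ℕ), by omega⟩) := by rw [hsrc]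
          _ = s.inl.toOrderHom ⟨(t : ℕ) - (g.toOrderHom 0 : ℕ), by omega⟩ :=
              congrArg (fun q : b ⟶ s.pt =>
                q.toOrderHom ⟨(t : ℕ) - (g.toOrderHom 0 : ℕ), by omega⟩) hw1
      · rw [pdesc_val_high f g s.inl s.inr hf hg s.condition _ h1 h2]
        have hsrc : (pk f g hg).toOrderHom ⟨(t : ℕ) - b.len + a.len, by omega⟩ = t := by
          apply Fin.ext
          rw [pk_val_high f g hg _ (by show ¬ (t : ℕ) - b.len + a.len < _; omega)
            (by show ¬ (t : ℕ) - b.len + a.len ≤ _; omega)]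
          show (t : ℕ) - b.len + a.len + b.len - a.len = (t : ℕ)
          omega
        calc w.toOrderHom t
            = w.toOrderHom ((pk f g hg).toOrderHom ⟨(t : ℕ) - b.len + a.len, by omega⟩) := by
              rw [hsrc]
          _ = s.inr.toOrderHom ⟨(t : ℕ) - b.len + a.len, by omega⟩ :=
              congrArg (fun q : c ⟶ s.pt =>
                q.toOrderHom ⟨(t : ℕ) - b.len + a.len, by omega⟩) hw2

/-- In any pushout of an active map along an inert map, the map parallel to the active one
is active. -/
lemma active_of_pushout (hf : IsActive f) (hg : IsInert g) {d : SimplexCategory}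
    {h : b ⟶ d} {k : c ⟶ d} (hp : IsPushout f g h k) : IsActive k := by
  have hpo := ppushout f g hf hg
  obtain ⟨w, hw1, hw2⟩ : {l : d ⟶ pobj a b c // h ≫ l = ph g hg (b := b) ∧ k ≫ l = pk f g hg} :=
    PushoutCocone.IsColimit.desc' hp.isColimit (ph g hg (b := b))
    (pk f g hg) (pcomm f g hf hg)
  obtain ⟨w', hw1', hw2'⟩ : {l : pobj a b c ⟶ d // ph g hg (b := b) ≫ l = h ∧ pk f g hg ≫ l = k} :=
    PushoutCocone.IsColimit.desc' hpo.isColimit h k hp.w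
  have hid1 : w' ≫ w = 𝟙 _ := by
    apply hpo.hom_ext
    · rw [← Category.assoc, hw1', hw1]; exact (Category.comp_id _).symm
    · rw [← Category.assoc, hw2', hw2]; exact (Category.comp_id _).symm
  have hid2 : w ≫ w' = 𝟙 _ := by
    apply hp.hom_ext
    · rw [← Category.assoc, hw1, hw1']; exact (Category.comp_id _).symm
    · rw [← Category.assoc, hw2, hw2']; exact (Category.comp_id _).symm
  have heq : pobj a b c = d := SimplexCategory.skeletal ⟨⟨w', w, hid1, hid2⟩⟩
  rw [← hw2']
  subst heq
  haveI : IsIso w' := ⟨w, hid1, hid2⟩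
  rw [SimplexCategory.eq_id_of_isIso w', Category.comp_id]
  exact pk_active f g hf hg

end UMP


section CulfLemmas

/-- Left cancellation for CULF maps. -/
lemma culf_of_comp {X Y Z : SSet.{0}} {u : X ⟶ Y} {v : Y ⟶ Z}
    (hv : IsCULF v) (hc : IsCULF (u ≫ v)) : IsCULF u := by
  intro a b g hg
  have hbig := hc g hg
  have hcomm : X.map g.op ≫ u.app (op a) = u.app (op b) ≫ Y.map g.op := u.naturality g.op
  refine IsPullback.of_bot ?_ hcomm (hv g hg)
  simpa using hbig

/-- The source of a CULF map into a decomposition space is a decomposition space. -/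
lemma decomp_of_culf {Y X : SSet.{0}} (F : Y ⟶ X) (hF : IsCULF F) (hX : IsDecomp X) :
    IsDecomp Y := by
  intro a b c d f g h k hf hg hp
  have hk : IsActive k := active_of_pushout f g hf hg hp
  have hXpb := hX f g h k hf hg hp
  have comm : ∀ z, Y.map f.op (Y.map h.op z) = Y.map g.op (Y.map k.op z) := by
    intro z
    calc Y.map f.op (Y.map h.op z) = Y.map ((f ≫ h).op) z :=
          (FunctorToTypes.map_comp_apply Y h.op f.op z).symm
      _ = Y.map ((g ≫ k).op) z := by rw [hp.w]
      _ = Y.map g.op (Y.map k.op z) := FunctorToTypes.map_comp_apply Y k.op g.op z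
  refine isPullback_of_exists_unique comm ?_
  intro yb yc hyy
  have compat : X.map f.op (F.app (op b) yb) = X.map g.op (F.app (op c) yc) := by
    calc X.map f.op (F.app (op b) yb) = F.app (op a) (Y.map f.op yb) :=
          (NatTrans.naturality_apply F f.op yb).symm
      _ = F.app (op a) (Y.map g.op yc) := congrArg _ hyy
      _ = X.map g.op (F.app (op c) yc) := NatTrans.naturality_apply F g.op yc
  obtain ⟨xd, ⟨hxd1, hxd2⟩, hxdu⟩ :=
    exists_unique_of_isPullback hXpb (F.app (op b) yb) (F.app (op c) yc) compat
  obtain ⟨yd, ⟨hyd1, hyd2⟩, hydu⟩ :=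
    exists_unique_of_isPullback (hF k hk) yc xd hxd2.symm
  obtain ⟨pb, _, hpbu⟩ :=
    exists_unique_of_isPullback (hF f hf) (Y.map f.op yb) (F.app (op b) yb)
      (NatTrans.naturality_apply F f.op yb)
  have hhd : Y.map h.op yd = yb := by
    have c1 : Y.map f.op (Y.map h.op yd) = Y.map f.op yb := by
      rw [comm yd, hyd1, hyy]
    have c2 : F.app (op b) (Y.map h.op yd) = F.app (op b) yb := by
      calc F.app (op b) (Y.map h.op yd) = X.map h.op (F.app (op d) yd) :=
            NatTrans.naturality_apply F h.op yd
        _ = X.map h.op xd := by rw [hyd2]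
        _ = F.app (op b) yb := hxd1
    have e1 := hpbu yb ⟨rfl, rfl⟩
    have e2 := hpbu (Y.map h.op yd) ⟨c1, c2⟩
    rw [e2, e1]
  refine ⟨yd, ⟨hhd, hyd1⟩, ?_⟩
  intro z hz
  have hFz : F.app (op d) z = xd := by
    apply hxdu
    constructor
    · calc X.map h.op (F.app (op d) z) = F.app (op b) (Y.map h.op z) :=
            (NatTrans.naturality_apply F h.op z).symm
        _ = F.app (op b) yb := by rw [hz.1]
    · calc X.map k.op (F.app (op d) z) = F.app (op c) (Y.map k.op z) :=
            (NatTrans.naturality_apply F k.op z).symm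
        _ = F.app (op c) yc := by rw [hz.2]
  exact hydu z ⟨hz.2, hFz⟩

end CulfLemmas
section Equiv

variable (D : DecompCat)

/-- The class of active maps in the opposite of the category of elements. -/
def actW : MorphismProperty (El D.X)ᵒᵖ := fun _ _ φ => IsActive φ.unop.1

/-- The fiber presheaf of an object of `Over D`. -/
@[simps]
def fiberF (ξ : Over D) : (El D.X)ᵒᵖ ⥤ Type where
  obj e := {x : ξ.left.X.obj (op (SimplexCategory.mk e.unop.n)) //
    ξ.hom.1.app (op (SimplexCategory.mk e.unop.n)) x = e.unop.σ}
  map {e e'} φ := TypeCat.ofHom fun x => ⟨ξ.left.X.map φ.unop.1.op x.1,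
    (NatTrans.naturality_apply ξ.hom.1 φ.unop.1.op x.1).trans
      (by rw [x.2]; exact φ.unop.2)⟩
  map_id e := by
    refine ConcreteCategory.hom_ext _ _ fun x => ?_
    apply Subtype.ext
    show ξ.left.X.map ((𝟙 e.unop : e.unop ⟶ e.unop).1).op x.1 = x.1
    show ξ.left.X.map (𝟙 _).op x.1 = x.1
    rw [op_id, FunctorToTypes.map_id_apply]
  map_comp {e e' e''} φ ψ := by
    refine ConcreteCategory.hom_ext _ _ fun x => ?_
    apply Subtype.ext
    show ξ.left.X.map ((ψ.unop ≫ φ.unop : e''.unop ⟶ e.unop).1).op x.1 = _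
    show ξ.left.X.map (ψ.unop.1 ≫ φ.unop.1).op x.1 = _
    rw [op_comp, FunctorToTypes.map_comp_apply]
    rfl

/-- The functor from the slice over `D` to presheaves on elements. -/
@[simps]
def psi0 : Over D ⥤ ((El D.X)ᵒᵖ ⥤ Type) where
  obj ξ := fiberF D ξ
  map {ξ ζ} η :=
    { app := fun e => TypeCat.ofHom fun x => ⟨η.left.1.app _ x.1, by
        have hw : η.left.1 ≫ ζ.hom.1 = ξ.hom.1 := congrArg Subtype.val (Over.w η)
        have h2 := types_congr_hom (congrArg
          (fun q : ξ.left.X ⟶ D.X => q.app (op (SimplexCategory.mk e.unop.n))) hw) x.1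
        exact h2.trans x.2⟩
      naturality := by
        intro e e' φ
        refine ConcreteCategory.hom_ext _ _ fun x => ?_
        apply Subtype.ext
        exact NatTrans.naturality_apply η.left.1 φ.unop.1.op x.1 }
  map_id ξ := by
    apply NatTrans.ext
    funext e
    refine ConcreteCategory.hom_ext _ _ fun x => ?_
    apply Subtype.ext
    rfl
  map_comp {ξ ζ θ} η η' := by
    apply NatTrans.ext
    funext e
    refine ConcreteCategory.hom_ext _ _ fun x => ?_
    apply Subtype.ext
    rfl

lemma psi0_inverts (ξ : Over D) : (actW D).IsInvertedBy (fiberF D ξ) := by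
  intro e e' φ hφ
  rw [isIso_iff_bijective]
  have hculf := ξ.hom.2
  have hpb := hculf φ.unop.1 hφ
  constructor
  · rintro ⟨x, hx⟩ ⟨y, hy⟩ hxy
    have hxy1 : ξ.left.X.map φ.unop.1.op x = ξ.left.X.map φ.unop.1.op y :=
      congrArg Subtype.val hxy
    obtain ⟨p, _, hpu⟩ := exists_unique_of_isPullback hpb (ξ.left.X.map φ.unop.1.op x)
      e.unop.σ ((NatTrans.naturality_apply ξ.hom.1 φ.unop.1.op x).trans
        (congrArg _ hx))
    have e1 := hpu x ⟨rfl, hx⟩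
    have e2 := hpu y ⟨hxy1.symm, hy⟩
    exact Subtype.ext (e1.trans e2.symm)
  · rintro ⟨y, hy⟩
    obtain ⟨x, ⟨hx1, hx2⟩, _⟩ := exists_unique_of_isPullback hpb y e.unop.σ
      (hy.trans φ.unop.2.symm)
    exact ⟨⟨x, hx2⟩, Subtype.ext hx1⟩

/-- The comparison functor into functors inverting the active maps. -/
@[simps]
def psi : Over D ⥤ (actW D).FunctorsInverting (Type 0) where
  obj ξ := ⟨fiberF D ξ, psi0_inverts D ξ⟩
  map {ξ ζ} η := ObjectProperty.homMk ((psi0 D).map η)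
  map_id ξ := ObjectProperty.hom_ext _ ((psi0 D).map_id ξ)
  map_comp η η' := ObjectProperty.hom_ext _ ((psi0 D).map_comp η η')

end Equiv


section FullFaithful

variable (D : DecompCat)

lemma fib_app_congr {ξ ζ : Over D} (η : fiberF D ξ ⟶ fiberF D ζ) {n : ℕ}
    {σ σ' : D.X.obj (op (SimplexCategory.mk n))} (h : σ = σ')
    (s : (fiberF D ξ).obj (op (⟨n, σ⟩ : El D.X)))
    (s' : (fiberF D ξ).obj (op (⟨n, σ'⟩ : El D.X)))
    (hv : s.1 = s'.1) :
    (η.app (op (⟨n, σ⟩ : El D.X)) s).1 = (η.app (op (⟨n, σ'⟩ : El D.X)) s').1 := by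
  subst h
  rw [Subtype.ext hv]

instance psi_faithful : (psi D).Faithful where
  map_injective := by
    intro ξ ζ η η' h
    apply Over.OverMorphism.ext
    apply Subtype.ext
    apply NatTrans.ext
    funext a
    refine ConcreteCategory.hom_ext _ _ fun x => ?_
    have h2 := types_congr_hom (congrArg (fun τ : (psi D).obj ξ ⟶ (psi D).obj ζ =>
      τ.hom.app (op (⟨a.unop.len, ξ.hom.1.app a x⟩ : El D.X))) h)
      (⟨x, rfl⟩ : (fiberF D ξ).obj (op (⟨a.unop.len, ξ.hom.1.app a x⟩ : El D.X)))
    exact congrArg Subtype.val h2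

variable {ξ ζ : Over D} (ηn : fiberF D ξ ⟶ fiberF D ζ)

/-- The underlying simplicial map extracted from a map of fiber presheaves. -/
def fullPre : ξ.left.X ⟶ ζ.left.X where
  app a := TypeCat.ofHom fun x => (ηn.app (op (⟨a.unop.len, ξ.hom.1.app a x⟩ : El D.X)) ⟨x, rfl⟩).1
  naturality := by
    intro a b φ
    refine ConcreteCategory.hom_ext _ _ fun x => ?_
    show (ηn.app (op (⟨b.unop.len, ξ.hom.1.app b (ξ.left.X.map φ x)⟩ : El D.X))
        ⟨ξ.left.X.map φ x, rfl⟩).1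
      = ζ.left.X.map φ ((ηn.app (op (⟨a.unop.len, ξ.hom.1.app a x⟩ : El D.X)) ⟨x, rfl⟩).1)
    have hnatp : ξ.hom.1.app b (ξ.left.X.map φ x) = D.X.map φ (ξ.hom.1.app a x) :=
      NatTrans.naturality_apply ξ.hom.1 φ x
    let μ : (⟨b.unop.len, D.X.map φ (ξ.hom.1.app a x)⟩ : El D.X) ⟶
        (⟨a.unop.len, ξ.hom.1.app a x⟩ : El D.X) := ⟨φ.unop, rfl⟩
    have nat0 := types_congr_hom (ηn.naturality μ.op)
      (⟨x, rfl⟩ : (fiberF D ξ).obj (op (⟨a.unop.len, ξ.hom.1.app a x⟩ : El D.X)))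
    have stepA := fib_app_congr D ηn hnatp
      (⟨ξ.left.X.map φ x, rfl⟩ :
        (fiberF D ξ).obj (op (⟨b.unop.len, ξ.hom.1.app b (ξ.left.X.map φ x)⟩ : El D.X)))
      ((fiberF D ξ).map μ.op ⟨x, rfl⟩) rfl
    exact stepA.trans (congrArg Subtype.val nat0)

lemma fullPre_w : fullPre D ηn ≫ ζ.hom.1 = ξ.hom.1 := by
  apply NatTrans.ext
  funext a
  refine ConcreteCategory.hom_ext _ _ fun x => ?_
  exact (ηn.app (op (⟨a.unop.len, ξ.hom.1.app a x⟩ : El D.X)) ⟨x, rfl⟩).2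

instance psi_full : (psi D).Full where
  map_surjective := by
    intro ξ ζ η
    have hculf : IsCULF (fullPre D η.hom) := by
      apply culf_of_comp ζ.hom.2
      rw [fullPre_w D η.hom]
      exact ξ.hom.2
    refine ⟨Over.homMk (⟨fullPre D η.hom, hculf⟩ : ξ.left ⟶ ζ.left)
      (Subtype.ext (fullPre_w D η.hom)), ?_⟩
    apply ObjectProperty.hom_ext
    show (psi0 D).map _ = η.hom
    apply NatTrans.ext
    funext e
    refine ConcreteCategory.hom_ext _ _ fun s => ?_
    apply Subtype.ext
    show (η.hom.app
        (op (⟨e.unop.n, ξ.hom.1.app (op (SimplexCategory.mk e.unop.n)) s.1⟩ : El D.X))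
        ⟨s.1, rfl⟩).1
      = (η.hom.app e s).1
    exact fib_app_congr D η.hom s.2 ⟨s.1, rfl⟩ ⟨s.1, s.2⟩ rfl

end FullFaithful


section EssSurj

variable (D : DecompCat) (M : (El D.X)ᵒᵖ ⥤ Type 0)

/-- The element of the category of elements determined by a simplex. -/
abbrev elembase {a : SimplexCategoryᵒᵖ} (d : D.X.obj a) : El D.X := ⟨a.unop.len, d⟩

/-- The canonical morphism in the category of elements over a simplicial operator. -/
def elm {a b : SimplexCategoryᵒᵖ} (φ : a ⟶ b) (d : D.X.obj a) :
    elembase D (D.X.map φ d) ⟶ elembase D d := ⟨φ.unop, rfl⟩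

lemma sigmaEq {α : Type} {F : α → Type} {d d' : α} {s : F d} {s' : F d'}
    (h : d = d') (h2 : HEq s s') : (⟨d, s⟩ : Σ x, F x) = ⟨d', s'⟩ := by
  subst h
  exact congrArg _ (eq_of_heq h2)

lemma mapG {x x' y y' : El D.X} (f : y ⟶ x) (f' : y' ⟶ x') (hx : x = x') (hy : y = y')
    (hf : HEq f.1 f'.1) (s : M.obj (op x)) (s' : M.obj (op x')) (hs : HEq s s') :
    HEq (M.map f.op s) (M.map f'.op s') := by
  subst hx
  subst hy
  have hff : f = f' := Subtype.ext (eq_of_heq hf)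
  subst hff
  rw [eq_of_heq hs]

/-- The simplicial set glued from a presheaf on the category of elements. -/
def gl : SSet.{0} where
  obj a := Σ d : D.X.obj a, M.obj (op (elembase D d))
  map {a b} φ := TypeCat.ofHom fun x => ⟨D.X.map φ x.1, M.map (elm D φ x.1).op x.2⟩
  map_id a := by
    refine ConcreteCategory.hom_ext _ _ fun x => ?_
    obtain ⟨d, s⟩ := x
    refine sigmaEq (FunctorToTypes.map_id_apply D.X d) ?_
    refine HEq.trans (mapG D M (elm D (𝟙 a) d) (𝟙 (elembase D d))
      rfl (congrArg (elembase D) (FunctorToTypes.map_id_apply D.X d)) HEq.rfl s s HEq.rfl) ?_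
    refine heq_of_eq ?_
    rw [op_id, FunctorToTypes.map_id_apply]
  map_comp {a b c} φ ψ := by
    refine ConcreteCategory.hom_ext _ _ fun x => ?_
    obtain ⟨d, s⟩ := x
    show (⟨D.X.map (φ ≫ ψ) d, M.map (elm D (φ ≫ ψ) d).op s⟩ :
        Σ d, M.obj (op (elembase D d)))
      = ⟨D.X.map ψ (D.X.map φ d), M.map (elm D ψ (D.X.map φ d)).op (M.map (elm D φ d).op s)⟩
    refine sigmaEq (FunctorToTypes.map_comp_apply D.X φ ψ d) ?_
    refine HEq.trans (mapG D M (elm D (φ ≫ ψ) d)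
      (elm D ψ (D.X.map φ d) ≫ elm D φ d)
      rfl (congrArg (elembase D) (FunctorToTypes.map_comp_apply D.X φ ψ d)) HEq.rfl s s
      HEq.rfl) ?_
    exact heq_of_eq (FunctorToTypes.map_comp_apply M (elm D φ d).op (elm D ψ (D.X.map φ d)).op s)

/-- The projection from the glued simplicial set. -/
def glp : gl D M ⟶ D.X where
  app a := TypeCat.ofHom fun x => x.1
  naturality a b φ := rfl

lemma glp_culf (hM : (actW D).IsInvertedBy M) : IsCULF (glp D M) := by
  intro a b g hg
  refine isPullback_of_exists_unique (fun z => rfl) ?_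
  intro xa db hcompat
  obtain ⟨da, s⟩ := xa
  have hda : da = D.X.map g.op db := hcompat
  subst hda
  have hiso : IsIso (M.map (elm D g.op db).op) := hM (elm D g.op db).op hg
  refine ⟨⟨db, inv (M.map (elm D g.op db).op) s⟩, ⟨?_, rfl⟩, ?_⟩
  · show (⟨D.X.map g.op db, M.map (elm D g.op db).op (inv (M.map (elm D g.op db).op) s)⟩ :
      (gl D M).obj (op a)) = ⟨D.X.map g.op db, s⟩
    refine congrArg (fun t => (⟨D.X.map g.op db, t⟩ : Σ d, M.obj (op (elembase D d)))) ?_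
    exact types_congr_hom (IsIso.inv_hom_id (M.map (elm D g.op db).op)) s
  · rintro ⟨db', s'⟩ ⟨hz1, hz2⟩
    have hdb : db' = db := hz2
    subst hdb
    have hs' : M.map (elm D g.op db').op s' = s := by
      injection hz1 with h1 h2
    have : s' = inv (M.map (elm D g.op db').op) s := by
      rw [← hs']
      exact (types_congr_hom (IsIso.hom_inv_id (M.map (elm D g.op db').op)) s').symm
    rw [this]

variable (hM : (actW D).IsInvertedBy M)

/-- The decomposition space glued from a presheaf. -/
def glDecomp : DecompCat :=
  ⟨gl D M, decomp_of_culf (glp D M) (glp_culf D M hM) D.decomp⟩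

/-- The object of the slice corresponding to a presheaf inverting active maps. -/
def glObj : Over D :=
  Over.mk (show glDecomp D M hM ⟶ D from ⟨glp D M, glp_culf D M hM⟩)

/-- The comparison isomorphism for essential surjectivity. -/
def glIso : M ≅ fiberF D (glObj D M hM) := by
  refine NatIso.ofComponents (fun e => Equiv.toIso ⟨fun s => ⟨⟨e.unop.σ, s⟩, rfl⟩,
    fun z => cast (congrArg (fun d => M.obj (op (⟨e.unop.n, d⟩ : El D.X))) z.2) z.1.2,
    ?_, ?_⟩) ?_
  · intro s
    rfl
  · rintro ⟨⟨d, s⟩, h⟩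
    have hd : d = e.unop.σ := h
    subst hd
    rfl
  · intro e e' φ
    refine ConcreteCategory.hom_ext _ _ fun s => ?_
    apply Subtype.ext
    show (⟨e'.unop.σ, M.map φ s⟩ : Σ d, M.obj (op (elembase D d)))
      = (gl D M).map φ.unop.1.op ⟨e.unop.σ, s⟩
    refine (sigmaEq φ.unop.2 ?_).symm
    exact mapG D M (elm D φ.unop.1.op e.unop.σ) φ.unop
      (show elembase D e.unop.σ = e.unop from rfl)
      (congrArg (fun d => (⟨e'.unop.n, d⟩ : El D.X)) φ.unop.2)
      HEq.rfl s s HEq.rfl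

instance psi_essSurj : (psi D).EssSurj where
  mem_essImage := by
    intro Mw
    refine ⟨glObj D Mw.obj Mw.property, ⟨?_⟩⟩
    exact { hom := ObjectProperty.homMk (glIso D Mw.obj Mw.property).inv
            inv := ObjectProperty.homMk (glIso D Mw.obj Mw.property).hom
            hom_inv_id := ObjectProperty.hom_ext _ (glIso D Mw.obj Mw.property).inv_hom_id
            inv_hom_id := ObjectProperty.hom_ext _ (glIso D Mw.obj Mw.property).hom_inv_id }

instance psi_isEquivalence : (psi D).IsEquivalence where

end EssSurj



theorem statement19 (D : DecompCat) :
    HasFiniteLimits (Over D) ∧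
      Nonempty (Σ inst : CartesianMonoidalCategory (Over D),
        @MonoidalClosed (Over D) _ inst.toMonoidalCategory) := by
  let W := actW D
  let e : Over D ≌ (MorphismProperty.Localization W ⥤ Type 0) :=
    (psi D).asEquivalence.trans (Localization.functorEquivalence W.Q W (Type 0)).symm
  have hfl : HasFiniteLimits (Over D) :=
    ⟨fun J _ _ => Adjunction.hasLimitsOfShape_of_equivalence e.functor⟩
  haveI := hfl
  haveI : HasFiniteProducts (Over D) := hasFiniteProducts_of_hasFiniteLimits _
  letI inst : CartesianMonoidalCategory (Over D) :=
    CartesianMonoidalCategory.ofHasFiniteProducts (C := Over D)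
  exact ⟨hfl, ⟨⟨inst, cartesianClosedOfEquiv e.symm⟩⟩⟩


end DecompPaper
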